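/- arXiv:2002.02087 — 3 statements merged into one kernel-verified Lean document; each statement's English description precedes it below -/
import Mathlib

section
/- Consider matrices A_1, …, A_N ∈ ℝ^{d×d}, symmetric positive definite matrices P_1, …, P_N, and scalars λ_s ∈ (0,1) and μ > 0 such that (i) A_iᵀ P_i A_i ≼ λ_s P_i for every i ∈ {1,…,N}, and (ii) ξᵀP_jξ ≤ μ · ξᵀP_iξ for all ξ ∈ ℝ^d and all i, j ∈ {1,…,N}. Let σ : ℕ → {1,…,N} be any switching signal and let x be the corresponding solution of x(t+1) = A_{σ(t)} x(t) with x(0) = x₀. Then for every t ∈ ℕ, V_{P_{σ(t)}}(x(t)) ≤ μ^{N(t)} · λ_s^{t} · V_{P_{σ(0)}}(x₀), where N(t) is the number of times s ∈ {1, …, t} with σ(s) ≠ σ(s−1). -/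
open Matrix

lemma quad_step {d : ℕ} (A P : Matrix (Fin d) (Fin d) ℝ) (lam : ℝ)
    (h : (lam • P - Aᵀ * P * A).PosSemidef) (v : Fin d → ℝ) :
    (A.mulVec v) ⬝ᵥ P.mulVec (A.mulVec v) ≤ lam * (v ⬝ᵥ P.mulVec v) := by
  have h2 := h.dotProduct_mulVec_nonneg v
  simp only [RCLike.star_def, sub_mulVec, dotProduct_sub, smul_mulVec,
    dotProduct_smul, star_trivial] at h2
  have key : v ⬝ᵥ (Aᵀ * P * A).mulVec v = (A.mulVec v) ⬝ᵥ P.mulVec (A.mulVec v) := by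
    rw [← mulVec_mulVec, ← mulVec_mulVec, dotProduct_mulVec, vecMul_transpose]
  rw [key] at h2
  simp only [smul_eq_mul] at h2
  linarith

/-- Given subsystems `A_1, …, A_N` with symmetric positive definite
matrices `P_1, …, P_N`, `λ_s ∈ (0,1)` and `μ > 0` with `A_iᵀP_iA_i ≼ λ_s P_i` and
`ξᵀP_jξ ≤ μ ξᵀP_iξ` for all `i, j, ξ`, any solution of the switched system
`x(t+1) = A_{σ(t)} x(t)` satisfies
`V_{P_{σ(t)}}(x(t)) ≤ μ^{N(t)} λ_sᵗ V_{P_{σ(0)}}(x₀)`, where `N(t)` counts the times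
`s ∈ {1, …, t}` with `σ(s) ≠ σ(s−1)`. -/
theorem switched_lyapunov_estimate
    {d N : ℕ} (hd : 0 < d)
    (A P : Fin N → Matrix (Fin d) (Fin d) ℝ)
    (hP : ∀ i, (P i).PosDef)
    (lam mu : ℝ) (hlam0 : 0 < lam) (hlam1 : lam < 1) (hmu0 : 0 < mu)
    (hLyap : ∀ i, (lam • P i - (A i)ᵀ * P i * A i).PosSemidef)
    (hmu : ∀ (i j : Fin N) (ξ : Fin d → ℝ),
      ξ ⬝ᵥ (P j).mulVec ξ ≤ mu * (ξ ⬝ᵥ (P i).mulVec ξ))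
    (σ : ℕ → Fin N) (x₀ : Fin d → ℝ) (x : ℕ → Fin d → ℝ)
    (hx0 : x 0 = x₀) (hx : ∀ t : ℕ, x (t + 1) = (A (σ t)).mulVec (x t)) :
    ∀ t : ℕ,
      (x t) ⬝ᵥ (P (σ t)).mulVec (x t) ≤
        mu ^ (((Finset.Icc 1 t).filter fun s => σ s ≠ σ (s - 1)).card) *
          lam ^ t * (x₀ ⬝ᵥ (P (σ 0)).mulVec x₀) := by
  intro t
  induction t with
  | zero => simp [hx0]
  | succ t ih =>
    -- card update
    have hcard : (((Finset.Icc 1 (t+1)).filter fun s => σ s ≠ σ (s - 1)).card)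
        = (((Finset.Icc 1 t).filter fun s => σ s ≠ σ (s - 1)).card)
          + (if σ (t+1) ≠ σ t then 1 else 0) := by
      rw [← Finset.insert_Icc_right_eq_Icc_add_one (show 1 ≤ t + 1 from Nat.succ_le_succ (Nat.zero_le t))]
      rw [Finset.filter_insert]
      by_cases h : σ (t+1) ≠ σ (t+1-1)
      · rw [if_pos h, Finset.card_insert_of_notMem (by simp [Finset.mem_filter])]
        simp only [Nat.add_sub_cancel] at h
        simp [h]
      · rw [if_neg h]
        simp only [Nat.add_sub_cancel] at h
        simp [h]
    set n := (((Finset.Icc 1 t).filter fun s => σ s ≠ σ (s - 1)).card) with hn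
    have step1 : (x (t+1)) ⬝ᵥ (P (σ (t+1))).mulVec (x (t+1)) ≤
        (if σ (t+1) ≠ σ t then mu else 1) * ((x (t+1)) ⬝ᵥ (P (σ t)).mulVec (x (t+1))) := by
      by_cases h : σ (t+1) ≠ σ t
      · simpa [h] using hmu (σ t) (σ (t+1)) (x (t+1))
      · push_neg at h
        simp [h]
    have step2 : (x (t+1)) ⬝ᵥ (P (σ t)).mulVec (x (t+1)) ≤
        lam * ((x t) ⬝ᵥ (P (σ t)).mulVec (x t)) := by
      rw [hx t]
      exact quad_step _ _ _ (hLyap (σ t)) (x t)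
    have hcpos : 0 < (if σ (t+1) ≠ σ t then mu else 1) := by
      split <;> [exact hmu0; norm_num]
    calc (x (t+1)) ⬝ᵥ (P (σ (t+1))).mulVec (x (t+1))
        ≤ (if σ (t+1) ≠ σ t then mu else 1) * ((x (t+1)) ⬝ᵥ (P (σ t)).mulVec (x (t+1))) := step1
      _ ≤ (if σ (t+1) ≠ σ t then mu else 1) * (lam * ((x t) ⬝ᵥ (P (σ t)).mulVec (x t))) := by
          exact mul_le_mul_of_nonneg_left step2 hcpos.le
      _ ≤ (if σ (t+1) ≠ σ t then mu else 1) * (lam *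
            (mu ^ n * lam ^ t * (x₀ ⬝ᵥ (P (σ 0)).mulVec x₀))) := by
          apply mul_le_mul_of_nonneg_left _ hcpos.le
          exact mul_le_mul_of_nonneg_left ih hlam0.le
      _ = mu ^ (n + (if σ (t+1) ≠ σ t then 1 else 0)) * lam ^ (t+1)
            * (x₀ ⬝ᵥ (P (σ 0)).mulVec x₀) := by
          by_cases h : σ (t+1) ≠ σ t <;> simp [h, pow_succ] <;> ring
      _ = _ := by rw [hcard]
end

section
/- Consider matrices A_1, …, A_N ∈ ℝ^{d×d}, symmetric positive definite matrices P_1, …, P_N, and scalars λ_s ∈ (0,1) and μ ≥ 1 such that (i) A_iᵀ P_i A_i ≼ λ_s P_i for every i ∈ {1,…,N}, and (ii) ξᵀP_jξ ≤ μ · ξᵀP_iξ for all ξ ∈ ℝ^d and all i, j ∈ {1,…,N}. Let τ ∈ ℕ satisfy τ > ln μ / |ln λ_s|. Then for every switching signal σ satisfying minimum dwell time τ and every initial condition x₀ ∈ ℝ^d, the switched system x(t+1) = A_{σ(t)} x(t), x(0) = x₀, is globally asymptotically stable: x(t) → 0 as t → ∞, and there exists a constant C ≥ 1, depending only on P_1,…,P_N,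 λ_s, μ, τ (not on σ or x₀), such that ‖x(t)‖ ≤ C‖x₀‖ for all t ∈ ℕ. -/
open Matrix Filter

private lemma quad_upper_aux {d : ℕ} (M : Matrix (Fin d) (Fin d) ℝ) :
    ∃ C : ℝ, ∀ x : Fin d → ℝ, x ⬝ᵥ M.mulVec x ≤ C * ‖x‖^2 := by
  refine ⟨∑ i, ∑ j, |M i j|, fun x => ?_⟩
  have hx : ∀ k, |x k| ≤ ‖x‖ := fun k => by
    simpa using norm_le_pi_norm x k
  calc x ⬝ᵥ M.mulVec x = ∑ i, ∑ j, x i * (M i j * x j) := by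
        simp [dotProduct, Matrix.mulVec, Finset.mul_sum]
    _ ≤ ∑ i, ∑ j, |M i j| * ‖x‖^2 := by
        refine Finset.sum_le_sum fun i _ => Finset.sum_le_sum fun j _ => ?_
        calc x i * (M i j * x j) ≤ |x i * (M i j * x j)| := le_abs_self _
          _ = |M i j| * (|x i| * |x j|) := by rw [abs_mul, abs_mul]; ring
          _ ≤ |M i j| * (‖x‖ * ‖x‖) := by
              exact mul_le_mul_of_nonneg_left
                (mul_le_mul (hx i) (hx j) (abs_nonneg _) (norm_nonneg x)) (abs_nonneg _)
          _ = |M i j| * ‖x‖^2 := by ring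
    _ = (∑ i, ∑ j, |M i j|) * ‖x‖^2 := by simp [Finset.sum_mul]

private lemma quad_lower_aux {d : ℕ} (hd : 0 < d) (M : Matrix (Fin d) (Fin d) ℝ)
    (hM : M.PosDef) :
    ∃ c : ℝ, 0 < c ∧ ∀ x : Fin d → ℝ, c * ‖x‖^2 ≤ x ⬝ᵥ M.mulVec x := by
  haveI : Nonempty (Fin d) := ⟨⟨0, hd⟩⟩
  have hcont : Continuous (fun x : Fin d → ℝ => x ⬝ᵥ M.mulVec x) := by
    simp only [dotProduct, Matrix.mulVec]
    fun_prop
  have hsph : IsCompact (Metric.sphere (0 : Fin d → ℝ) 1) := isCompact_sphere 0 1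
  have hne : (Metric.sphere (0 : Fin d → ℝ) 1).Nonempty := by
    rw [NormedSpace.sphere_nonempty]; norm_num
  obtain ⟨y, hy, hmin⟩ := hsph.exists_isMinOn hne hcont.continuousOn
  have hy1 : ‖y‖ = 1 := by simpa using hy
  have hy0 : y ≠ 0 := by intro h; rw [h] at hy1; simp at hy1
  refine ⟨y ⬝ᵥ M.mulVec y, by simpa using hM.dotProduct_mulVec_pos hy0, fun x => ?_⟩
  rcases eq_or_ne x 0 with rfl | hx0
  · simp [Matrix.mulVec_zero]
  · have hnx : 0 < ‖x‖ := norm_pos_iff.2 hx0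
    set u : Fin d → ℝ := ‖x‖⁻¹ • x with hu
    have hu1 : u ∈ Metric.sphere (0 : Fin d → ℝ) 1 := by
      simp [hu, norm_smul, abs_inv, inv_mul_cancel₀ hnx.ne']
    have key : y ⬝ᵥ M.mulVec y ≤ u ⬝ᵥ M.mulVec u := hmin hu1
    have hscale : u ⬝ᵥ M.mulVec u = ‖x‖⁻¹^2 * (x ⬝ᵥ M.mulVec x) := by
      simp [hu, Matrix.mulVec_smul, smul_dotProduct, dotProduct_smul]
      ring
    rw [hscale] at key
    have := mul_le_mul_of_nonneg_left key (le_of_lt (by positivity : (0:ℝ) < ‖x‖^2))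
    calc (y ⬝ᵥ M.mulVec y) * ‖x‖^2 = ‖x‖^2 * (y ⬝ᵥ M.mulVec y) := by ring
      _ ≤ ‖x‖^2 * (‖x‖⁻¹^2 * (x ⬝ᵥ M.mulVec x)) := this
      _ = x ⬝ᵥ M.mulVec x := by field_simp

private lemma lyap_step_aux {d : ℕ} (A P : Matrix (Fin d) (Fin d) ℝ) (lam : ℝ)
    (h : (lam • P - Aᵀ * P * A).PosSemidef) (x : Fin d → ℝ) :
    (A.mulVec x) ⬝ᵥ P.mulVec (A.mulVec x) ≤ lam * (x ⬝ᵥ P.mulVec x) := by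
  have h2 : (0:ℝ) ≤ x ⬝ᵥ (lam • P - Aᵀ * P * A).mulVec x := by simpa using h.dotProduct_mulVec_nonneg x
  have e1 : x ⬝ᵥ (lam • P - Aᵀ * P * A).mulVec x
      = lam * (x ⬝ᵥ P.mulVec x) - (A.mulVec x) ⬝ᵥ P.mulVec (A.mulVec x) := by
    rw [Matrix.sub_mulVec, dotProduct_sub]
    congr 1
    · rw [Matrix.smul_mulVec, dotProduct_smul]
      simp
    · rw [← Matrix.mulVec_mulVec, ← Matrix.mulVec_mulVec,
        Matrix.dotProduct_mulVec x Aᵀ, Matrix.vecMul_transpose]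
  rw [e1] at h2
  linarith

/-- A switching signal `σ : ℕ → Fin N` satisfies minimum dwell time `τ` if its switching
instants `0 = κ_0 < κ_1 < κ_2 < ⋯` (the times at which `σ` changes value, together with
the initial time `0`) satisfy `κ_{m+1} − κ_m ≥ τ`: equivalently, the first time `t > 0`
at which `σ` changes value is `≥ τ`, and any two times at which `σ` changes value are at
least `τ` apart. -/
def MinDwellTime {N : ℕ} (σ : ℕ → Fin N) (τ : ℕ) : Prop :=
  (∀ t : ℕ, 0 < t → σ t ≠ σ (t - 1) → τ ≤ t) ∧
  (∀ s t : ℕ, 0 < s → s < t → σ s ≠ σ (s - 1) → σ t ≠ σ (t - 1) → τ ≤ t - s)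


private lemma count_aux {N : ℕ} (σ : ℕ → Fin N) (τ : ℕ) (hτ1 : 1 ≤ τ)
    (hσ : MinDwellTime σ τ) (t : ℕ) :
    τ * ((Finset.Icc 1 t).filter (fun s => σ s ≠ σ (s - 1))).card ≤ t := by
  induction t using Nat.strong_induction_on with
  | _ t ih =>
    set S := (Finset.Icc 1 t).filter (fun s => σ s ≠ σ (s - 1)) with hS
    rcases S.eq_empty_or_nonempty with he | hne
    · rw [he]; simp
    · set m := S.max' hne with hm
      have hmS : m ∈ S := S.max'_mem hne
      have hm1 : 1 ≤ m ∧ m ≤ t ∧ σ m ≠ σ (m - 1) := by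
        simp only [hS, Finset.mem_filter, Finset.mem_Icc] at hmS
        tauto
      have hτm : τ ≤ m := hσ.1 m hm1.1 hm1.2.2
      have hkey : S = insert m ((Finset.Icc 1 (m - τ)).filter (fun s => σ s ≠ σ (s - 1))) := by
        ext s
        simp only [hS, Finset.mem_filter, Finset.mem_Icc, Finset.mem_insert]
        constructor
        · rintro ⟨⟨h1, h2⟩, h3⟩
          rcases eq_or_ne s m with rfl | hsm
          · exact Or.inl rfl
          · have hlt : s < m := lt_of_le_of_ne (S.le_max' s (by
              simp only [hS, Finset.mem_filter, Finset.mem_Icc]; exact ⟨⟨h1, h2⟩, h3⟩)) hsm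
            have := hσ.2 s m h1 hlt h3 hm1.2.2
            exact Or.inr ⟨⟨h1, by omega⟩, h3⟩
        · rintro (rfl | ⟨⟨h1, h2⟩, h3⟩)
          · exact ⟨⟨hm1.1, hm1.2.1⟩, hm1.2.2⟩
          · exact ⟨⟨h1, by omega⟩, h3⟩
      have hnotmem : m ∉ (Finset.Icc 1 (m - τ)).filter (fun s => σ s ≠ σ (s - 1)) := by
        simp only [Finset.mem_filter, Finset.mem_Icc]
        rintro ⟨⟨_, h⟩, _⟩; omega
      have hcard : S.card
          = ((Finset.Icc 1 (m - τ)).filter (fun s => σ s ≠ σ (s - 1))).card + 1 := by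
        rw [hkey, Finset.card_insert_of_notMem hnotmem]
      have hih := ih (m - τ) (by omega)
      rw [hcard]
      have : τ * (((Finset.Icc 1 (m - τ)).filter (fun s => σ s ≠ σ (s - 1))).card + 1)
          = τ * ((Finset.Icc 1 (m - τ)).filter (fun s => σ s ≠ σ (s - 1))).card + τ := by ring
      omega

/-- Given `A_i`, symmetric positive definite `P_i`, `λ_s ∈ (0,1)` and
`μ ≥ 1` with `A_iᵀP_iA_i ≼ λ_s P_i` and `ξᵀP_jξ ≤ μ ξᵀP_iξ`, and `τ ∈ ℕ` with
`τ > ln μ / |ln λ_s|`: for every switching signal `σ` with minimum dwell time `τ` and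
every `x₀`, the switched system is GAS — `x(t) → 0` — and there is a constant `C ≥ 1`,
independent of `σ` and `x₀`, with `‖x(t)‖ ≤ C‖x₀‖` for all `t`. -/
theorem dwell_time_implies_GAS
    {d N : ℕ} (hd : 0 < d)
    (A P : Fin N → Matrix (Fin d) (Fin d) ℝ)
    (hP : ∀ i, (P i).PosDef)
    (lam mu : ℝ) (hlam0 : 0 < lam) (hlam1 : lam < 1) (hmu : 1 ≤ mu)
    (hLyap : ∀ i, (lam • P i - (A i)ᵀ * P i * A i).PosSemidef)
    (hcomp : ∀ (i j : Fin N) (ξ : Fin d → ℝ),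
      ξ ⬝ᵥ (P j).mulVec ξ ≤ mu * (ξ ⬝ᵥ (P i).mulVec ξ))
    (τ : ℕ) (hτ : Real.log mu / |Real.log lam| < (τ : ℝ)) :
    ∃ C : ℝ, 1 ≤ C ∧
      ∀ σ : ℕ → Fin N, MinDwellTime σ τ →
        ∀ (x₀ : Fin d → ℝ) (x : ℕ → Fin d → ℝ),
          x 0 = x₀ → (∀ t : ℕ, x (t + 1) = (A (σ t)).mulVec (x t)) →
          Tendsto x atTop (nhds 0) ∧ ∀ t : ℕ, ‖x t‖ ≤ C * ‖x₀‖ := by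
  -- trivial case N = 0
  rcases Nat.eq_zero_or_pos N with rfl | hN
  · exact ⟨1, le_refl 1, fun σ _ => (σ 0).elim0⟩
  haveI : Nonempty (Fin N) := Fin.pos_iff_nonempty.mp hN
  -- basic log facts
  have hloglam : Real.log lam < 0 := Real.log_neg hlam0 hlam1
  have habs : |Real.log lam| = -Real.log lam := abs_of_neg hloglam
  have hlogmu : 0 ≤ Real.log mu := Real.log_nonneg hmu
  have hτ1 : 1 ≤ τ := by
    by_contra h
    have : τ = 0 := by omega
    rw [this] at hτ
    have : (0:ℝ) ≤ Real.log mu / |Real.log lam| :=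
      div_nonneg hlogmu (abs_nonneg _)
    norm_num at hτ
    linarith
  have hτ0 : (0:ℝ) < τ := by exact_mod_cast (by omega : 0 < τ)
  -- the contraction factor over one dwell period
  have ha1 : mu * lam ^ τ < 1 := by
    have h1 : Real.log mu < (τ:ℝ) * (-Real.log lam) := by
      rw [habs] at hτ
      have := (div_lt_iff₀ (by linarith : (0:ℝ) < -Real.log lam)).mp hτ
      linarith
    have h2 : Real.log (mu * lam ^ τ) < 0 := by
      rw [Real.log_mul (by linarith : mu ≠ 0) (by positivity : lam ^ τ ≠ 0),
        Real.log_pow]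
      linarith
    have h3 : 0 < mu * lam ^ τ := by positivity
    exact (Real.log_neg_iff h3).mp h2
  have ha0 : 0 < mu * lam ^ τ := by positivity
  -- quadratic form bounds, uniform in i
  choose cf hcf0 hcf using fun i => quad_lower_aux hd (P i) (hP i)
  choose Cf hCf using fun i => quad_upper_aux (P i)
  set c : ℝ := Finset.univ.inf' Finset.univ_nonempty cf with hcdef
  set Cu : ℝ := Finset.univ.sup' Finset.univ_nonempty Cf with hCudef
  have hc0 : 0 < c := by
    rw [hcdef, Finset.lt_inf'_iff]
    exact fun i _ => hcf0 i
  have hcl : ∀ i (ξ : Fin d → ℝ), c * ‖ξ‖^2 ≤ ξ ⬝ᵥ (P i).mulVec ξ := by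
    intro i ξ
    refine le_trans ?_ (hcf i ξ)
    have : c ≤ cf i := Finset.inf'_le _ (Finset.mem_univ i)
    nlinarith [sq_nonneg ‖ξ‖]
  have hCuu : ∀ i (ξ : Fin d → ℝ), ξ ⬝ᵥ (P i).mulVec ξ ≤ Cu * ‖ξ‖^2 := by
    intro i ξ
    refine le_trans (hCf i ξ) ?_
    have : Cf i ≤ Cu := Finset.le_sup' _ (Finset.mem_univ i)
    nlinarith [sq_nonneg ‖ξ‖]
  have hCu0 : 0 < Cu := by
    obtain ⟨i⟩ := ‹Nonempty (Fin N)›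
    obtain ⟨ξ, hξ⟩ : ∃ ξ : Fin d → ℝ, ‖ξ‖ = 1 := by
      haveI : Nonempty (Fin d) := ⟨⟨0, hd⟩⟩
      refine ⟨fun _ => 1, ?_⟩
      simp [pi_norm_const]
    have h1 := hcl i ξ
    have h2 := hCuu i ξ
    rw [hξ] at h1 h2
    simp at h1 h2
    linarith
  -- the constant
  refine ⟨max 1 (Real.sqrt (Cu / c)), le_max_left _ _, ?_⟩
  intro σ hσ x₀ x hx0 hxrec
  -- Lyapunov functions along the trajectory
  set V : Fin N → (Fin d → ℝ) → ℝ := fun i ξ => ξ ⬝ᵥ (P i).mulVec ξ with hV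
  set W : ℕ → ℝ := fun t => V (σ t) (x t) with hW
  set n : ℕ → ℕ := fun t => ((Finset.Icc 1 t).filter (fun s => σ s ≠ σ (s - 1))).card with hn
  have hWlb : ∀ t, c * ‖x t‖^2 ≤ W t := fun t => hcl (σ t) (x t)
  have hW0 : ∀ t, 0 ≤ W t := fun t => le_trans (by positivity) (hWlb t)
  have hstep : ∀ t, V (σ t) (x (t+1)) ≤ lam * W t := by
    intro t
    rw [hxrec t]
    exact lyap_step_aux (A (σ t)) (P (σ t)) lam (hLyap (σ t)) (x t)
  -- filter counting step
  have hicc : ∀ t : ℕ, Finset.Icc 1 (t+1) = insert (t+1) (Finset.Icc 1 t) := by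
    intro t; ext s; simp only [Finset.mem_Icc, Finset.mem_insert]; omega
  have hnstep : ∀ t : ℕ, (σ (t+1) = σ t → n (t+1) = n t) ∧
      (σ (t+1) ≠ σ t → n (t+1) = n t + 1) := by
    intro t
    have hfs : ((Finset.Icc 1 (t+1)).filter (fun s => σ s ≠ σ (s - 1)))
        = if σ (t+1) ≠ σ t then
            insert (t+1) ((Finset.Icc 1 t).filter (fun s => σ s ≠ σ (s - 1)))
          else (Finset.Icc 1 t).filter (fun s => σ s ≠ σ (s - 1)) := by
      rw [hicc t, Finset.filter_insert]
      simp only [Nat.add_sub_cancel]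
    constructor
    · intro h
      simp only [hn]
      rw [hfs, if_neg (not_not_intro h)]
    · intro h
      have hmem : (t+1) ∉ (Finset.Icc 1 t).filter (fun s => σ s ≠ σ (s - 1)) := by
        simp only [Finset.mem_filter, Finset.mem_Icc]
        rintro ⟨⟨_, h2⟩, _⟩; omega
      simp only [hn]
      rw [hfs, if_pos h, Finset.card_insert_of_notMem hmem]
  -- main decay estimate
  have hdecay : ∀ t, W t ≤ mu ^ (n t) * lam ^ t * W 0 := by
    intro t
    induction t with
    | zero =>
      have : n 0 = 0 := by simp [hn]
      rw [this]; simp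
    | succ t ih =>
      rcases eq_or_ne (σ (t+1)) (σ t) with h | h
      · have hn' : n (t+1) = n t := (hnstep t).1 h
        have : W (t+1) = V (σ t) (x (t+1)) := by rw [hW]; simp [h]
        rw [this, hn']
        calc V (σ t) (x (t+1)) ≤ lam * W t := hstep t
          _ ≤ lam * (mu ^ (n t) * lam ^ t * W 0) := by
              exact mul_le_mul_of_nonneg_left ih (le_of_lt hlam0)
          _ = mu ^ (n t) * lam ^ (t+1) * W 0 := by ring
      · have hn' : n (t+1) = n t + 1 := (hnstep t).2 h
        have h1 : W (t+1) ≤ mu * V (σ t) (x (t+1)) := hcomp (σ t) (σ (t+1)) (x (t+1))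
        have h2 : mu * V (σ t) (x (t+1)) ≤ mu * (lam * W t) :=
          mul_le_mul_of_nonneg_left (hstep t) (by linarith)
        have h3 : mu * (lam * W t) ≤ mu * (lam * (mu ^ (n t) * lam ^ t * W 0)) := by
          refine mul_le_mul_of_nonneg_left ?_ (by linarith)
          exact mul_le_mul_of_nonneg_left ih (le_of_lt hlam0)
        rw [hn']
        calc W (t+1) ≤ mu * (lam * (mu ^ (n t) * lam ^ t * W 0)) := by linarith
          _ = mu ^ (n t + 1) * lam ^ (t+1) * W 0 := by ring
  -- counting bound
  have hcount : ∀ t, τ * n t ≤ t := fun t => count_aux σ τ hτ1 hσ t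
  -- rewrite decay in dwell form
  have hdecay2 : ∀ t, W t ≤ (mu * lam ^ τ) ^ (n t) * lam ^ (t - τ * n t) * W 0 := by
    intro t
    have h1 : mu ^ (n t) * lam ^ t = (mu * lam ^ τ) ^ (n t) * lam ^ (t - τ * n t) := by
      have hct := hcount t
      have ht : t = τ * n t + (t - τ * n t) := by omega
      calc mu ^ (n t) * lam ^ t
          = mu ^ (n t) * lam ^ (τ * n t + (t - τ * n t)) := by rw [← ht]
        _ = mu ^ (n t) * ((lam ^ τ) ^ (n t) * lam ^ (t - τ * n t)) := by
            rw [pow_add, pow_mul]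
        _ = (mu * lam ^ τ) ^ (n t) * lam ^ (t - τ * n t) := by
            rw [mul_pow]; ring
    rw [← h1]
    exact hdecay t
  -- uniform bound W t ≤ W 0
  have hWbdd : ∀ t, W t ≤ W 0 := by
    intro t
    refine le_trans (hdecay2 t) ?_
    have h1 : (mu * lam ^ τ) ^ (n t) ≤ 1 := pow_le_one₀ (le_of_lt ha0) (le_of_lt ha1)
    have h2 : lam ^ (t - τ * n t) ≤ 1 := pow_le_one₀ (le_of_lt hlam0) (le_of_lt hlam1)
    have h4 : (mu * lam ^ τ) ^ (n t) * lam ^ (t - τ * n t) ≤ 1 := by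
      calc (mu * lam ^ τ) ^ (n t) * lam ^ (t - τ * n t) ≤ 1 * 1 :=
            mul_le_mul h1 h2 (pow_nonneg (le_of_lt hlam0) _) (by linarith)
        _ = 1 := by ring
    calc (mu * lam ^ τ) ^ (n t) * lam ^ (t - τ * n t) * W 0 ≤ 1 * W 0 :=
          mul_le_mul_of_nonneg_right h4 (hW0 0)
      _ = W 0 := one_mul _
  -- norm bound
  have hnormbdd : ∀ t, ‖x t‖ ≤ max 1 (Real.sqrt (Cu / c)) * ‖x₀‖ := by
    intro t
    have h1 : c * ‖x t‖^2 ≤ Cu * ‖x₀‖^2 := by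
      calc c * ‖x t‖^2 ≤ W t := hWlb t
        _ ≤ W 0 := hWbdd t
        _ ≤ Cu * ‖x 0‖^2 := hCuu (σ 0) (x 0)
        _ = Cu * ‖x₀‖^2 := by rw [hx0]
    have h2 : ‖x t‖^2 ≤ (Real.sqrt (Cu / c) * ‖x₀‖)^2 := by
      rw [mul_pow, Real.sq_sqrt (by positivity : (0:ℝ) ≤ Cu / c)]
      rw [div_mul_eq_mul_div, le_div_iff₀ hc0]
      nlinarith
    have h3 : ‖x t‖ ≤ Real.sqrt (Cu / c) * ‖x₀‖ := by
      have := Real.sqrt_le_sqrt h2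
      rwa [Real.sqrt_sq (norm_nonneg _),
        Real.sqrt_sq (by positivity)] at this
    refine le_trans h3 ?_
    exact mul_le_mul_of_nonneg_right (le_max_right _ _) (norm_nonneg _)
  refine ⟨?_, hnormbdd⟩
  -- convergence
  set m : ℝ := max lam (mu * lam ^ τ) with hmdef
  have hm0 : 0 < m := lt_max_of_lt_left hlam0
  have hm1 : m < 1 := max_lt hlam1 ha1
  set e : ℕ → ℕ := fun t => n t + (t - τ * n t) with hedef
  have hWm : ∀ t, W t ≤ m ^ (e t) * W 0 := by
    intro t
    refine le_trans (hdecay2 t) ?_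
    have h1 : (mu * lam ^ τ) ^ (n t) ≤ m ^ (n t) :=
      pow_le_pow_left₀ (le_of_lt ha0) (le_max_right _ _) _
    have h2 : lam ^ (t - τ * n t) ≤ m ^ (t - τ * n t) :=
      pow_le_pow_left₀ (le_of_lt hlam0) (le_max_left _ _) _
    have h3 : (mu * lam ^ τ) ^ (n t) * lam ^ (t - τ * n t) ≤ m ^ (n t) * m ^ (t - τ * n t) := by
      exact mul_le_mul h1 h2 (pow_nonneg (le_of_lt hlam0) _) (pow_nonneg (le_of_lt hm0) _)
    rw [hedef]
    simp only
    rw [pow_add]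
    nlinarith [hW0 0]
  have he_atTop : Tendsto e atTop atTop := by
    rw [tendsto_atTop_atTop]
    intro b
    refine ⟨τ * b, fun t ht => ?_⟩
    have hτe : t ≤ τ * e t := by
      have h1 : t - τ * n t ≤ τ * (t - τ * n t) := Nat.le_mul_of_pos_left _ (by omega)
      have h2 : τ * e t = τ * n t + τ * (t - τ * n t) := by rw [hedef]; ring
      have h3 := hcount t
      omega
    have : τ * b ≤ τ * e t := le_trans ht hτe
    exact Nat.le_of_mul_le_mul_left this (by omega)
  have hpow0 : Tendsto (fun t => m ^ (e t) * (W 0 / c)) atTop (nhds 0) := by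
    have h1 : Tendsto (fun k : ℕ => m ^ k) atTop (nhds 0) :=
      tendsto_pow_atTop_nhds_zero_of_lt_one (le_of_lt hm0) hm1
    have h2 := (h1.comp he_atTop).mul_const (W 0 / c)
    simpa using h2
  have hxnorm : Tendsto (fun t => ‖x t‖) atTop (nhds 0) := by
    have hb : ∀ t, ‖x t‖ ≤ Real.sqrt (m ^ (e t) * (W 0 / c)) := by
      intro t
      have h1 : ‖x t‖^2 ≤ m ^ (e t) * (W 0 / c) := by
        have h2 : c * ‖x t‖^2 ≤ m ^ (e t) * W 0 := le_trans (hWlb t) (hWm t)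
        rw [mul_div_assoc'] at *
        rw [le_div_iff₀ hc0]
        linarith
      calc ‖x t‖ = Real.sqrt (‖x t‖^2) := (Real.sqrt_sq (norm_nonneg _)).symm
        _ ≤ Real.sqrt (m ^ (e t) * (W 0 / c)) := Real.sqrt_le_sqrt h1
    have hg0 : Tendsto (fun t => Real.sqrt (m ^ (e t) * (W 0 / c))) atTop (nhds 0) := by
      have := (Real.continuous_sqrt.tendsto 0).comp hpow0
      simpa [Function.comp_def] using this
    exact squeeze_zero (fun t => norm_nonneg _) hb hg0
  exact tendsto_zero_iff_norm_tendsto_zero.mpr hxnorm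
end

section
/- Consider matrices A_1, …, A_N ∈ ℝ^{d×d}, symmetric positive definite matrices P_1, …, P_N, and a scalar λ_s ∈ (0,1) such that A_iᵀ P_i A_i ≼ λ_s P_i for every i ∈ {1,…,N}. Define μ_{ij} := λ_max(P_i^{-1/2} P_j P_i^{-1/2}) for i, j ∈ {1,…,N} and μ := max_{i,j} μ_{ij}, and assume μ > 1. Then every natural number τ with τ > ln μ / |ln λ_s| (in particular τ = ⌈ln μ / |ln λ_s| + ε⌉ for any ε > 0) is a stabilizing minimum dwell time: for every switching signal σ satisfying minimum dwell time τ and every x₀ ∈ ℝ^d, the solution of x(t+1) = A_{σ(t)} x(t), x(0) = x₀, converges to 0 as t → ∞. -/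
open Matrix Filter

/-- The largest (real) eigenvalue of a matrix `M`, i.e. the supremum of the real roots of
its characteristic polynomial.  For a real symmetric matrix this is `λ_max(M)`. -/
noncomputable def lamMax {d : ℕ} (M : Matrix (Fin d) (Fin d) ℝ) : ℝ :=
  sSup {x : ℝ | M.charpoly.IsRoot x}

/-- The positive semidefinite square root of a positive semidefinite matrix, as defined in
Mathlib (Dec 2024) under this name; it has since been removed from Mathlib. -/
noncomputable def Matrix.PosSemidef.sqrt {n : Type*} [Fintype n] [DecidableEq n]
    {A : Matrix n n ℝ} (hA : A.PosSemidef) : Matrix n n ℝ :=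
  hA.1.eigenvectorUnitary.1 * diagonal ((↑) ∘ Real.sqrt ∘ hA.1.eigenvalues) *
  (star hA.1.eigenvectorUnitary : Matrix n n ℝ)

namespace DwellAux

open Polynomial

variable {d : ℕ}

lemma alg_conj {c : ℝ} {U W D M : Matrix (Fin d) (Fin d) ℝ} (hUW : U * W = 1)
    (hM : M = U * D * W) :
    Matrix.diagonal (fun _ => c) - M = U * (Matrix.diagonal (fun _ => c) - D) * W := by
  subst hM
  rw [Matrix.mul_sub, Matrix.sub_mul]
  congr 1
  rw [smul_one_eq_diagonal (α := ℝ) (m := Fin d) c |>.symm]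
  rw [mul_smul_comm, smul_mul_assoc, mul_one, hUW]

lemma decomp {M : Matrix (Fin d) (Fin d) ℝ} (hM : M.IsHermitian) (c : ℝ) :
    Matrix.diagonal (fun _ => c) - M =
      (hM.eigenvectorUnitary : Matrix (Fin d) (Fin d) ℝ) *
        Matrix.diagonal (fun k => c - hM.eigenvalues k) *
        (star hM.eigenvectorUnitary : Matrix (Fin d) (Fin d) ℝ) := by
  have hU : (hM.eigenvectorUnitary : Matrix (Fin d) (Fin d) ℝ) *
      (star hM.eigenvectorUnitary : Matrix (Fin d) (Fin d) ℝ) = 1 :=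
    Matrix.mem_unitaryGroup_iff.mp hM.eigenvectorUnitary.2
  have hspec := hM.spectral_theorem
  have hid : (RCLike.ofReal : ℝ → ℝ) ∘ hM.eigenvalues = hM.eigenvalues := by
    funext k; simp
  rw [hid] at hspec
  rw [alg_conj hU hspec, Matrix.diagonal_sub]

lemma charpoly_eval (M : Matrix (Fin d) (Fin d) ℝ) (c : ℝ) :
    M.charpoly.eval c = (Matrix.diagonal (fun _ => c) - M).det := by
  rw [Matrix.charpoly, ← Polynomial.coe_evalRingHom, RingHom.map_det]
  congr 1
  ext i j
  by_cases h : i = j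
  · subst h; simp [Matrix.charmatrix_apply_eq]
  · simp [Matrix.charmatrix_apply_ne _ _ _ h, Matrix.diagonal_apply_ne _ h]

lemma charpoly_eval_herm {M : Matrix (Fin d) (Fin d) ℝ} (hM : M.IsHermitian) (c : ℝ) :
    M.charpoly.eval c = ∏ k, (c - hM.eigenvalues k) := by
  rw [charpoly_eval, decomp hM c, Matrix.det_mul, Matrix.det_mul]
  have hU : ((hM.eigenvectorUnitary : Matrix (Fin d) (Fin d) ℝ)).det *
      ((star hM.eigenvectorUnitary : Matrix (Fin d) (Fin d) ℝ)).det = 1 := by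
    rw [← Matrix.det_mul, Matrix.mem_unitaryGroup_iff.mp hM.eigenvectorUnitary.2, Matrix.det_one]
  calc (hM.eigenvectorUnitary : Matrix (Fin d) (Fin d) ℝ).det *
        (Matrix.diagonal (fun k => c - hM.eigenvalues k)).det *
        (star hM.eigenvectorUnitary : Matrix (Fin d) (Fin d) ℝ).det
      = (Matrix.diagonal (fun k => c - hM.eigenvalues k)).det *
        ((hM.eigenvectorUnitary : Matrix (Fin d) (Fin d) ℝ).det *
         (star hM.eigenvectorUnitary : Matrix (Fin d) (Fin d) ℝ).det) := by ring
    _ = ∏ k, (c - hM.eigenvalues k) := by rw [hU, mul_one, Matrix.det_diagonal]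

lemma root_set_eq {M : Matrix (Fin d) (Fin d) ℝ} (hM : M.IsHermitian) :
    {x : ℝ | M.charpoly.IsRoot x} = Set.range hM.eigenvalues := by
  ext c
  simp only [Set.mem_setOf_eq, Polynomial.IsRoot, charpoly_eval_herm hM, Set.mem_range]
  rw [Finset.prod_eq_zero_iff]
  constructor
  · rintro ⟨k, -, hk⟩; exact ⟨k, by linarith [sub_eq_zero.mp hk]⟩
  · rintro ⟨k, hk⟩; exact ⟨k, Finset.mem_univ k, by rw [hk, sub_self]⟩

lemma eig_le_lamMax {M : Matrix (Fin d) (Fin d) ℝ} (hM : M.IsHermitian) (k : Fin d) :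
    hM.eigenvalues k ≤ lamMax M := by
  rw [lamMax, root_set_eq hM]
  exact le_csSup ((Set.finite_range _).bddAbove) ⟨k, rfl⟩

lemma psd_of_eig_le {M : Matrix (Fin d) (Fin d) ℝ} (hM : M.IsHermitian) {c : ℝ}
    (h : ∀ k, hM.eigenvalues k ≤ c) : (Matrix.diagonal (fun _ => c) - M).PosSemidef := by
  rw [decomp hM c, Matrix.star_eq_conjTranspose]
  exact (Matrix.PosSemidef.diagonal fun k => sub_nonneg.mpr (h k)).mul_mul_conjTranspose_same _

lemma psd_of_le_eig {M : Matrix (Fin d) (Fin d) ℝ} (hM : M.IsHermitian) {c : ℝ}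
    (h : ∀ k, c ≤ hM.eigenvalues k) : (M - Matrix.diagonal (fun _ => c)).PosSemidef := by
  have hneg : Matrix.diagonal (fun k : Fin d => hM.eigenvalues k - c)
      = -(Matrix.diagonal (fun k => c - hM.eigenvalues k)) := by
    have : (fun k : Fin d => hM.eigenvalues k - c) = fun k => -(c - hM.eigenvalues k) := by
      funext k; ring
    rw [this, Matrix.diagonal_neg]
  have key : M - Matrix.diagonal (fun _ => c) =
      (hM.eigenvectorUnitary : Matrix (Fin d) (Fin d) ℝ) *
        Matrix.diagonal (fun k => hM.eigenvalues k - c) *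
        (star hM.eigenvectorUnitary : Matrix (Fin d) (Fin d) ℝ) := by
    rw [hneg, Matrix.mul_neg, Matrix.neg_mul, ← decomp hM c, neg_sub]
  rw [key, Matrix.star_eq_conjTranspose]
  exact (Matrix.PosSemidef.diagonal fun k => sub_nonneg.mpr (h k)).mul_mul_conjTranspose_same _

lemma dp_nonneg (v : Fin d → ℝ) : 0 ≤ v ⬝ᵥ v :=
  Finset.sum_nonneg fun i _ => mul_self_nonneg (v i)

lemma quad_expand {M : Matrix (Fin d) (Fin d) ℝ} (hpsd : M.PosSemidef) (v : Fin d → ℝ) :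
    0 ≤ v ⬝ᵥ M *ᵥ v := by simpa using hpsd.dotProduct_mulVec_nonneg v

lemma diag_quad (c : ℝ) (v : Fin d → ℝ) :
    v ⬝ᵥ (Matrix.diagonal (fun _ : Fin d => c)) *ᵥ v = c * (v ⬝ᵥ v) := by
  rw [← smul_one_eq_diagonal, Matrix.smul_mulVec, Matrix.one_mulVec,
    dotProduct_smul, smul_eq_mul]

lemma quad_le {M : Matrix (Fin d) (Fin d) ℝ} (hM : M.IsHermitian) {c : ℝ}
    (h : ∀ k, hM.eigenvalues k ≤ c) (v : Fin d → ℝ) :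
    v ⬝ᵥ M *ᵥ v ≤ c * (v ⬝ᵥ v) := by
  have := quad_expand (psd_of_eig_le hM h) v
  rw [Matrix.sub_mulVec, dotProduct_sub, diag_quad] at this
  linarith

lemma quad_ge {M : Matrix (Fin d) (Fin d) ℝ} (hM : M.IsHermitian) {c : ℝ}
    (h : ∀ k, c ≤ hM.eigenvalues k) (v : Fin d → ℝ) :
    c * (v ⬝ᵥ v) ≤ v ⬝ᵥ M *ᵥ v := by
  have := quad_expand (psd_of_le_eig hM h) v
  rw [Matrix.sub_mulVec, dotProduct_sub, diag_quad] at this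
  linarith

lemma dot_conj' (B A : Matrix (Fin d) (Fin d) ℝ) (v : Fin d → ℝ) :
    (A *ᵥ v) ⬝ᵥ B *ᵥ (A *ᵥ v) = v ⬝ᵥ (Aᵀ * B * A) *ᵥ v := by
  have h1 : A *ᵥ v = v ᵥ* Aᵀ := (Matrix.vecMul_transpose A v).symm
  rw [Matrix.mulVec_mulVec] at *
  rw [Matrix.dotProduct_mulVec, h1, Matrix.vecMul_vecMul, ← Matrix.dotProduct_mulVec,
    ← Matrix.mulVec_mulVec, ← Matrix.mulVec_mulVec]
  congr 1
  rw [Matrix.mulVec_mulVec, Matrix.mulVec_mulVec, mul_assoc]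

lemma dot_conj (B S : Matrix (Fin d) (Fin d) ℝ) (hS : Sᵀ = S) (v : Fin d → ℝ) :
    (S *ᵥ v) ⬝ᵥ B *ᵥ (S *ᵥ v) = v ⬝ᵥ (S * B * S) *ᵥ v := by
  rw [dot_conj', hS]

lemma sqrt_psd' {A : Matrix (Fin d) (Fin d) ℝ} (hA : A.PosSemidef) : hA.sqrt.PosSemidef := by
  unfold Matrix.PosSemidef.sqrt
  rw [Matrix.star_eq_conjTranspose]
  exact (Matrix.PosSemidef.diagonal fun k => by simp [Real.sqrt_nonneg]).mul_mul_conjTranspose_same _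
lemma sqrt_mul_self' {A : Matrix (Fin d) (Fin d) ℝ} (hA : A.PosSemidef) :
    hA.sqrt * hA.sqrt = A := by
  have hU : (star hA.1.eigenvectorUnitary : Matrix (Fin d) (Fin d) ℝ) *
      (hA.1.eigenvectorUnitary : Matrix (Fin d) (Fin d) ℝ) = 1 :=
    Matrix.mem_unitaryGroup_iff'.mp hA.1.eigenvectorUnitary.2
  have h2 : diagonal (((↑) ∘ Real.sqrt ∘ hA.1.eigenvalues : Fin d → ℝ)) *
      diagonal ((↑) ∘ Real.sqrt ∘ hA.1.eigenvalues) = diagonal hA.1.eigenvalues := by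
    rw [diagonal_mul_diagonal]; congr 1; funext k
    simp [Real.mul_self_sqrt (hA.eigenvalues_nonneg k)]
  unfold Matrix.PosSemidef.sqrt
  calc _ = (hA.1.eigenvectorUnitary : Matrix (Fin d) (Fin d) ℝ) *
        (diagonal ((↑) ∘ Real.sqrt ∘ hA.1.eigenvalues) *
        ((star hA.1.eigenvectorUnitary : Matrix (Fin d) (Fin d) ℝ) *
        (hA.1.eigenvectorUnitary : Matrix (Fin d) (Fin d) ℝ)) *
        diagonal ((↑) ∘ Real.sqrt ∘ hA.1.eigenvalues)) *
        (star hA.1.eigenvectorUnitary : Matrix (Fin d) (Fin d) ℝ) := by simp only [mul_assoc]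
    _ = _ := by
      rw [hU, mul_one, h2]
      conv_rhs => rw [hA.1.spectral_theorem]
      rfl
lemma compare_lyap {Pi' Pj : Matrix (Fin d) (Fin d) ℝ} (hPi : Pi'.PosDef)
    (hPj : Pj.IsHermitian) {c : ℝ}
    (hc : lamMax ((hPi.posSemidef.sqrt)⁻¹ * Pj * (hPi.posSemidef.sqrt)⁻¹) ≤ c)
    (v : Fin d → ℝ) :
    v ⬝ᵥ Pj *ᵥ v ≤ c * (v ⬝ᵥ Pi' *ᵥ v) := by
  set S := hPi.posSemidef.sqrt with hSdef
  have hSherm : S.IsHermitian := (sqrt_psd' hPi.posSemidef).1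
  have hSS : S * S = Pi' := sqrt_mul_self' hPi.posSemidef
  have hdet : IsUnit S.det := by
    have hdp : 0 < Pi'.det := hPi.det_pos
    rw [← hSS, Matrix.det_mul] at hdp
    have : S.det ≠ 0 := fun h => by rw [h] at hdp; simp at hdp
    exact isUnit_iff_ne_zero.mpr this
  have hST : Sᵀ = S := by
    have := hSherm.eq
    rwa [Matrix.conjTranspose_eq_transpose_of_trivial] at this
  have hSinv : S⁻¹.IsHermitian := hSherm.inv
  have hMherm : ((S⁻¹ * Pj * S⁻¹)).IsHermitian := by
    have : (S⁻¹ * Pj * S⁻¹)ᴴ = S⁻¹ᴴ * Pjᴴ * S⁻¹ᴴ := by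
      rw [Matrix.conjTranspose_mul, Matrix.conjTranspose_mul, mul_assoc]
    rw [Matrix.IsHermitian, this, hSinv.eq, hPj.eq]
  have hquad := quad_le hMherm (fun k => le_trans (eig_le_lamMax hMherm k) hc) (S *ᵥ v)
  rw [dot_conj _ S hST] at hquad
  have e1 : S * (S⁻¹ * Pj * S⁻¹) * S = Pj := by
    rw [show S * (S⁻¹ * Pj * S⁻¹) * S = (S * S⁻¹) * Pj * (S⁻¹ * S) by noncomm_ring,
      Matrix.mul_nonsing_inv _ hdet, Matrix.nonsing_inv_mul _ hdet, one_mul, mul_one]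
  have e2 : S * 1 * S = Pi' := by rw [mul_one, hSS]
  have hdot : (S *ᵥ v) ⬝ᵥ (S *ᵥ v) = v ⬝ᵥ Pi' *ᵥ v := by
    have := dot_conj 1 S hST v
    rw [e2, Matrix.one_mulVec] at this
    exact this
  rw [e1] at hquad
  rw [hdot] at hquad
  exact hquad

end DwellAux

open DwellAux in
/-- Given `A_1, …, A_N`, symmetric positive definite `P_1, …, P_N` and
`λ_s ∈ (0,1)` with `A_iᵀP_iA_i ≼ λ_s P_i` for all `i`, set
`μ_{ij} := λ_max(P_i^{-1/2} P_j P_i^{-1/2})` and `μ := max_{i,j} μ_{ij}`, and assume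
`μ > 1`.  Then every `τ ∈ ℕ` with `τ > ln μ / |ln λ_s|` is a stabilizing minimum dwell
time: for every switching signal `σ` with minimum dwell time `τ` and every `x₀`, the
solution of `x(t+1) = A_{σ(t)} x(t)`, `x(0) = x₀`, converges to `0`. -/
theorem algorithm_dwell_time_is_stabilizing
    {d N : ℕ} (hd : 0 < d) (hN : 0 < N)
    (A P : Fin N → Matrix (Fin d) (Fin d) ℝ)
    (hP : ∀ i, (P i).PosDef)
    (lam : ℝ) (hlam0 : 0 < lam) (hlam1 : lam < 1)
    (hLyap : ∀ i, (lam • P i - (A i)ᵀ * P i * A i).PosSemidef)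
    (mu : ℝ)
    (hmudef : mu = ⨆ i : Fin N, ⨆ j : Fin N,
      lamMax (((hP i).posSemidef.sqrt)⁻¹ * P j * ((hP i).posSemidef.sqrt)⁻¹))
    (hmu1 : 1 < mu) :
    ∀ τ : ℕ, Real.log mu / |Real.log lam| < (τ : ℝ) →
      ∀ σ : ℕ → Fin N, MinDwellTime σ τ →
        ∀ (x₀ : Fin d → ℝ) (x : ℕ → Fin d → ℝ),
          x 0 = x₀ → (∀ t : ℕ, x (t + 1) = (A (σ t)).mulVec (x t)) →
          Tendsto x atTop (nhds 0) := by
  intro τ hτ σ hσ x₀ x hx0 hxrec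
  -- scalar facts
  have hmu0 : (0:ℝ) < mu := lt_trans one_pos hmu1
  have hlogmu : 0 < Real.log mu := Real.log_pos hmu1
  have hloglam : Real.log lam < 0 := Real.log_neg hlam0 hlam1
  have habs : |Real.log lam| = -Real.log lam := abs_of_neg hloglam
  have habs_pos : 0 < |Real.log lam| := by rw [habs]; linarith
  have hτR : (0:ℝ) < τ := lt_trans (div_pos hlogmu habs_pos) hτ
  have hτ0 : 0 < τ := by exact_mod_cast hτR
  -- the supremum bound
  have hmu_le : ∀ i j : Fin N,
      lamMax (((hP i).posSemidef.sqrt)⁻¹ * P j * ((hP i).posSemidef.sqrt)⁻¹) ≤ mu := by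
    intro i j
    rw [hmudef]
    calc lamMax (((hP i).posSemidef.sqrt)⁻¹ * P j * ((hP i).posSemidef.sqrt)⁻¹)
        ≤ ⨆ j' : Fin N,
            lamMax (((hP i).posSemidef.sqrt)⁻¹ * P j' * ((hP i).posSemidef.sqrt)⁻¹) :=
          le_ciSup (f := fun j' : Fin N =>
              lamMax (((hP i).posSemidef.sqrt)⁻¹ * P j' * ((hP i).posSemidef.sqrt)⁻¹))
            (Set.Finite.bddAbove (Set.finite_range _)) j
      _ ≤ _ := le_ciSup (f := fun i' : Fin N => ⨆ j' : Fin N,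
            lamMax (((hP i').posSemidef.sqrt)⁻¹ * P j' * ((hP i').posSemidef.sqrt)⁻¹))
          (Set.Finite.bddAbove (Set.finite_range _)) i
  -- Lyapunov function
  set V : ℕ → ℝ := fun t => x t ⬝ᵥ (P (σ t)) *ᵥ x t with hV
  have hVnonneg : ∀ t, 0 ≤ V t := fun t => quad_expand (hP (σ t)).posSemidef _
  -- one-step decrease within a mode
  have hstep0 : ∀ t, x (t+1) ⬝ᵥ (P (σ t)) *ᵥ x (t+1) ≤ lam * V t := by
    intro t
    rw [hxrec t, dot_conj']
    have hpsd := quad_expand (hLyap (σ t)) (x t)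
    rw [Matrix.sub_mulVec, dotProduct_sub, Matrix.smul_mulVec, dotProduct_smul,
      smul_eq_mul] at hpsd
    linarith
  -- mode comparison
  have hswitch : ∀ (i j : Fin N) (v : Fin d → ℝ),
      v ⬝ᵥ (P j) *ᵥ v ≤ mu * (v ⬝ᵥ (P i) *ᵥ v) :=
    fun i j v => compare_lyap (hP i) (hP j).1 (hmu_le i j) v
  -- switch counter
  classical
  set n : ℕ → ℕ := fun t =>
    ((Finset.Icc 1 t).filter (fun s => σ s ≠ σ (s - 1))).card with hn
  have hn0 : n 0 = 0 := by
    simp [hn, Finset.Icc_eq_empty (by omega : ¬ (1:ℕ) ≤ 0)]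
  have hnsucc : ∀ t, n (t+1) = if σ (t+1) ≠ σ t then n t + 1 else n t := by
    intro t
    have hins : Finset.Icc 1 (t+1) = insert (t+1) (Finset.Icc 1 t) :=
      (Finset.insert_Icc_right_eq_Icc_add_one (by omega)).symm
    have hnotmem : (t+1) ∉ Finset.Icc 1 t := by simp
    rw [hn]
    simp only [hins, Finset.filter_insert]
    by_cases h : σ (t+1) ≠ σ t
    · rw [if_pos (by simpa using h), if_pos h,
        Finset.card_insert_of_notMem (fun hc => hnotmem (Finset.mem_of_mem_filter _ hc))]
    · rw [if_neg (by simpa using h), if_neg h]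
  -- V decay estimate
  have hVbound : ∀ t, V t ≤ mu ^ (n t) * lam ^ t * V 0 := by
    intro t
    induction t with
    | zero => simp [hn0]
    | succ t ih =>
      have hstep : V (t+1) ≤ (if σ (t+1) ≠ σ t then mu * lam else lam) * V t := by
        by_cases h : σ (t+1) ≠ σ t
        · rw [if_pos h]
          have h1 : V (t+1) ≤ mu * (x (t+1) ⬝ᵥ (P (σ t)) *ᵥ x (t+1)) :=
            hswitch (σ t) (σ (t+1)) (x (t+1))
          have h2 := hstep0 t
          calc V (t+1) ≤ mu * (x (t+1) ⬝ᵥ (P (σ t)) *ᵥ x (t+1)) := h1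
            _ ≤ mu * (lam * V t) := by
                exact mul_le_mul_of_nonneg_left h2 (le_of_lt hmu0)
            _ = mu * lam * V t := by ring
        · rw [if_neg h]
          push_neg at h
          have := hstep0 t
          rw [hV]
          simpa [h] using this
      by_cases h : σ (t+1) ≠ σ t
      · rw [if_pos h] at hstep
        rw [hnsucc t, if_pos h]
        have h3 : mu * lam * V t ≤ mu * lam * (mu ^ (n t) * lam ^ t * V 0) :=
          mul_le_mul_of_nonneg_left ih (by positivity)
        calc V (t+1) ≤ mu * lam * V t := hstep
          _ ≤ mu * lam * (mu ^ (n t) * lam ^ t * V 0) := h3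
          _ = mu ^ (n t + 1) * lam ^ (t+1) * V 0 := by ring
      · rw [if_neg h] at hstep
        rw [hnsucc t, if_neg h]
        have h3 : lam * V t ≤ lam * (mu ^ (n t) * lam ^ t * V 0) :=
          mul_le_mul_of_nonneg_left ih (le_of_lt hlam0)
        calc V (t+1) ≤ lam * V t := hstep
          _ ≤ lam * (mu ^ (n t) * lam ^ t * V 0) := h3
          _ = mu ^ (n t) * lam ^ (t+1) * V 0 := by ring
  -- dwell-time bound on switch count
  have hcount : ∀ t, τ * n t ≤ t := by
    intro t
    induction t using Nat.strong_induction_on with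
    | _ t ih =>
      set F := (Finset.Icc 1 t).filter (fun s => σ s ≠ σ (s - 1)) with hF
      rcases F.eq_empty_or_nonempty with hFe | hFne
      · have hnt : n t = F.card := rfl
        simp [hnt, hFe]
      · set a := F.max' hFne with ha
        have haF : a ∈ F := F.max'_mem hFne
        have haIcc : a ∈ Finset.Icc 1 t := Finset.mem_of_mem_filter _ haF
        have ha1 : 1 ≤ a := (Finset.mem_Icc.mp haIcc).1
        have hat : a ≤ t := (Finset.mem_Icc.mp haIcc).2
        have hpa : σ a ≠ σ (a - 1) := (Finset.mem_filter.mp haF).2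
        have hτa : τ ≤ a := hσ.1 a (by omega) hpa
        have hsub : F.erase a ⊆ (Finset.Icc 1 (a - τ)).filter (fun s => σ s ≠ σ (s - 1)) := by
          intro s hs
          have hsne : s ≠ a := (Finset.mem_erase.mp hs).1
          have hsF : s ∈ F := (Finset.mem_erase.mp hs).2
          have hsIcc : s ∈ Finset.Icc 1 t := Finset.mem_of_mem_filter _ hsF
          have hs1 : 1 ≤ s := (Finset.mem_Icc.mp hsIcc).1
          have hps : σ s ≠ σ (s - 1) := (Finset.mem_filter.mp hsF).2
          have hsa : s ≤ a := F.le_max' s hsF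
          have hslt : s < a := lt_of_le_of_ne hsa hsne
          have hgap : τ ≤ a - s := hσ.2 s a (by omega) hslt hps hpa
          refine Finset.mem_filter.mpr ⟨Finset.mem_Icc.mpr ⟨hs1, by omega⟩, hps⟩
        have hcard : n t = (F.erase a).card + 1 := by
          have hnt : n t = F.card := rfl
          rw [hnt, ← Finset.card_erase_add_one haF]
        have hcard2 : (F.erase a).card ≤ n (a - τ) :=
          Finset.card_le_card hsub
        have hIH : τ * n (a - τ) ≤ a - τ := ih (a - τ) (by omega)
        calc τ * n t = τ * (F.erase a).card + τ := by rw [hcard]; ring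
          _ ≤ τ * n (a - τ) + τ := by
              have := Nat.mul_le_mul_left τ hcard2; omega
          _ ≤ (a - τ) + τ := by omega
          _ ≤ t := by omega
  -- geometric decay rate
  set r : ℝ := Real.exp (Real.log mu / τ + Real.log lam) with hr
  have hr0 : 0 ≤ r := Real.exp_nonneg _
  have hr1 : r < 1 := by
    rw [hr, Real.exp_lt_one_iff]
    have h1 : Real.log mu < τ * |Real.log lam| := (div_lt_iff₀ habs_pos).mp hτ
    rw [habs] at h1
    have h2 : Real.log mu / τ < -Real.log lam := by
      rw [div_lt_iff₀ hτR]
      linarith [h1]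
    linarith
  have hgeom : ∀ t : ℕ, mu ^ (n t) * lam ^ t ≤ r ^ t := by
    intro t
    have e1 : mu ^ (n t) = Real.exp ((n t : ℝ) * Real.log mu) := by
      rw [Real.exp_nat_mul, Real.exp_log hmu0]
    have e2 : lam ^ t = Real.exp ((t : ℝ) * Real.log lam) := by
      rw [Real.exp_nat_mul, Real.exp_log hlam0]
    have e3 : r ^ t = Real.exp ((t : ℝ) * (Real.log mu / τ + Real.log lam)) := by
      rw [hr, Real.exp_nat_mul]
    rw [e1, e2, e3, ← Real.exp_add, Real.exp_le_exp]
    have hcnt : (τ : ℝ) * (n t : ℝ) ≤ (t : ℝ) := by exact_mod_cast hcount t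
    have h4 : (n t : ℝ) ≤ (t : ℝ) / τ := by
      rw [le_div_iff₀ hτR]; linarith
    have h5 : (n t : ℝ) * Real.log mu ≤ ((t : ℝ) / τ) * Real.log mu :=
      mul_le_mul_of_nonneg_right h4 (le_of_lt hlogmu)
    have : ((t : ℝ) / τ) * Real.log mu = (t : ℝ) * (Real.log mu / τ) := by ring
    nlinarith [h5]
  -- lower bound on quadratic forms
  have hfinNE : (Finset.univ : Finset (Fin d)).Nonempty := ⟨⟨0, hd⟩, Finset.mem_univ _⟩
  have hNNE : (Finset.univ : Finset (Fin N)).Nonempty := ⟨⟨0, hN⟩, Finset.mem_univ _⟩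
  set e : Fin N → ℝ := fun i => Finset.univ.inf' hfinNE ((hP i).1.eigenvalues) with he
  have hepos : ∀ i, 0 < e i := by
    intro i
    rw [he]
    rw [Finset.lt_inf'_iff]
    exact fun k _ => (hP i).eigenvalues_pos k
  have hequad : ∀ i v, e i * (v ⬝ᵥ v) ≤ v ⬝ᵥ (P i) *ᵥ v := by
    intro i v
    exact quad_ge (hP i).1 (fun k => Finset.inf'_le _ (Finset.mem_univ k)) v
  set E : ℝ := Finset.univ.inf' hNNE e with hE
  have hEpos : 0 < E := by
    rw [hE, Finset.lt_inf'_iff]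
    exact fun i _ => hepos i
  have hEquad : ∀ t, E * (x t ⬝ᵥ x t) ≤ V t := by
    intro t
    calc E * (x t ⬝ᵥ x t)
        ≤ e (σ t) * (x t ⬝ᵥ x t) := by
          apply mul_le_mul_of_nonneg_right (Finset.inf'_le _ (Finset.mem_univ _))
          exact dp_nonneg _
      _ ≤ V t := hequad (σ t) (x t)
  -- final limit argument
  have hbound : ∀ t, x t ⬝ᵥ x t ≤ (V 0 / E) * r ^ t := by
    intro t
    have h1 : V t ≤ r ^ t * V 0 := by
      calc V t ≤ mu ^ (n t) * lam ^ t * V 0 := hVbound t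
        _ ≤ r ^ t * V 0 := mul_le_mul_of_nonneg_right (hgeom t) (hVnonneg 0)
    have h2 := hEquad t
    rw [div_mul_eq_mul_div, le_div_iff₀ hEpos]
    calc (x t ⬝ᵥ x t) * E = E * (x t ⬝ᵥ x t) := by ring
      _ ≤ V t := h2
      _ ≤ r ^ t * V 0 := h1
      _ = V 0 * r ^ t := by ring
  have hglim : Tendsto (fun t : ℕ => (V 0 / E) * r ^ t) atTop (nhds 0) := by
    have := (tendsto_pow_atTop_nhds_zero_of_lt_one hr0 hr1).const_mul (V 0 / E)
    simpa using this
  rw [tendsto_pi_nhds]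
  intro k
  have hdotlim : Tendsto (fun t => x t ⬝ᵥ x t) atTop (nhds 0) := by
    apply squeeze_zero (fun t => dp_nonneg _) hbound hglim
  have hsq : Tendsto (fun t => (x t k)^2) atTop (nhds 0) := by
    apply squeeze_zero (fun t => sq_nonneg _) (fun t => ?_) hdotlim
    have : (x t k)^2 = x t k * x t k := sq (x t k) ▸ rfl
    rw [dotProduct]
    calc (x t k)^2 = x t k * x t k := by ring
      _ ≤ ∑ i, x t i * x t i :=
        Finset.single_le_sum (fun i _ => mul_self_nonneg (x t i)) (Finset.mem_univ k)
  have habslim : Tendsto (fun t => |x t k|) atTop (nhds 0) := by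
    have hcomp := (Real.continuous_sqrt.tendsto 0).comp hsq
    rw [Real.sqrt_zero] at hcomp
    exact hcomp.congr fun t => by simp [Function.comp, Real.sqrt_sq_eq_abs]
  have : Tendsto (fun t => x t k) atTop (nhds 0) := by
    have hneg : Tendsto (fun t => -|x t k|) atTop (nhds 0) := by
      simpa using habslim.neg
    exact tendsto_of_tendsto_of_tendsto_of_le_of_le hneg habslim
      (fun t => neg_abs_le _) (fun t => le_abs_self _)
  simpa using this
end
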